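/- arXiv:1506.06260 — 3 statements merged into one kernel-verified Lean document; each statement's English description precedes it below -/
import Mathlib

section
/- Let G be a group fitting in a short exact sequence 1 → C → G → D∞ → 1 where C is infinite virtually cyclic and D∞ is the infinite dihedral group. Then G contains a subgroup isomorphic to ℤ², i.e., two commuting elements generating a free abelian group of rank 2. -/
open Subgroup

-- pigeonhole: some nonzero power lands in a finite-index subgroup
lemma aux_exists_zpow_mem {C : Type*} [Group C] (H : Subgroup C) [H.FiniteIndex]
    (x : C) : ∃ a : ℤ, a ≠ 0 ∧ x ^ a ∈ H := by
  have : ¬ Function.Injective (fun n : ℤ => ((x ^ n : C) : C ⧸ H)) :=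
    not_injective_infinite_finite _
  rw [Function.not_injective_iff] at this
  obtain ⟨m, n, hmn, hne⟩ := this
  refine ⟨m - n, sub_ne_zero.2 hne, ?_⟩
  have := (QuotientGroup.eq (s := H)).1 hmn.symm
  simpa [← zpow_neg, ← zpow_add, add_comm, sub_eq_add_neg] using this

-- an infinite-order element with finite-index cyclic span
lemma aux_exists_gen {C : Type*} [Group C] [Infinite C]
    (hC : ∃ K : Subgroup C, IsCyclic K ∧ K.FiniteIndex) :
    ∃ c : C, ¬ IsOfFinOrder c ∧ (zpowers c).FiniteIndex := by
  obtain ⟨K, hcyc, hfi⟩ := hC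
  have hKinf : Infinite K := by
    by_contra hfin
    rw [not_infinite_iff_finite] at hfin
    have : Finite C := Finite.of_equiv _ (groupEquivQuotientProdSubgroup (s := K)).symm
    exact not_finite C
  obtain ⟨g, hg⟩ := hcyc.exists_generator
  have hgord : ¬ IsOfFinOrder g := by
    intro hf
    have hfin : (zpowers (g : K) : Set K).Finite := finite_zpowers.2 hf
    have htop : (zpowers (g : K) : Set K) = Set.univ := by
      ext x; simpa using hg x
    rw [htop] at hfin
    have : Finite K := Set.finite_univ_iff.1 hfin
    exact not_finite K
  have hcord : ¬ IsOfFinOrder (g : C) := by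
    intro hf
    exact hgord ((Submonoid.isOfFinOrder_coe).1 hf)
  refine ⟨(g : C), hcord, ?_⟩
  have hle : K ≤ zpowers (g : C) := by
    intro x hx
    obtain ⟨n, hn⟩ := hg ⟨x, hx⟩
    exact ⟨n, by simpa using congrArg (Subtype.val) hn⟩
  exact finiteIndex_of_le hle

lemma aux_toSubgroup_zmultiples (m : ℤ) :
    AddSubgroup.toSubgroup (AddSubgroup.zmultiples m) =
      zpowers (Multiplicative.ofAdd m) := by
  ext x
  have h1 : x ∈ AddSubgroup.toSubgroup (AddSubgroup.zmultiples m) ↔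
      Multiplicative.toAdd x ∈ AddSubgroup.zmultiples m := Iff.rfl
  rw [h1, AddSubgroup.mem_zmultiples_iff, mem_zpowers_iff]
  constructor
  · rintro ⟨k, hk⟩
    refine ⟨k, ?_⟩
    rw [← ofAdd_zsmul, hk]
    simp
  · rintro ⟨k, hk⟩
    refine ⟨k, ?_⟩
    have := congrArg Multiplicative.toAdd hk
    rw [← ofAdd_zsmul] at this
    simpa [mul_comm] using this

lemma aux_index_zpowers_zpow {C : Type*} [Group C] {c : C} (hc : ¬ IsOfFinOrder c)
    (m : ℤ) : (zpowers (c ^ m)).index = m.natAbs * (zpowers c).index := by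
  have hinj : Function.Injective (zpowersHom C c) := by
    have := injective_zpow_iff_not_isOfFinOrder.2 hc
    intro a b hab
    exact Multiplicative.toAdd.injective (this hab)
  have hmap : (zpowers (Multiplicative.ofAdd m)).map (zpowersHom C c) = zpowers (c ^ m) := by
    rw [MonoidHom.map_zpowers]; rfl
  have hrel : (zpowers (c ^ m)).relIndex (zpowers c) = m.natAbs := by
    have h1 := Subgroup.index_comap (zpowers (c ^ m)) (zpowersHom C c)
    rw [range_zpowersHom] at h1
    rw [← h1, ← hmap, Subgroup.comap_map_eq_self_of_injective hinj,
      ← aux_toSubgroup_zmultiples, AddSubgroup.index_toSubgroup, Int.index_zmultiples]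
  rw [← Subgroup.relIndex_mul_index (zpowers_le.2 (zpow_mem (mem_zpowers c) m) : zpowers (c ^ m) ≤ zpowers c), hrel]

theorem extension_of_infinite_dihedral_by_vc_contains_Z2
    {C G : Type*} [Group C] [Group G] [Infinite C]
    (hC : ∃ K : Subgroup C, IsCyclic K ∧ K.FiniteIndex)
    (i : C →* G) (p : G →* DihedralGroup 0)
    (hi : Function.Injective i) (hp : Function.Surjective p)
    (hexact : i.range = p.ker) :
    ∃ f : Multiplicative (ℤ × ℤ) →* G, Function.Injective f := by
  obtain ⟨c, hc, hfin⟩ := aux_exists_gen hC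
  haveI := hfin
  have hczpow := injective_zpow_iff_not_isOfFinOrder.2 hc
  obtain ⟨h, hh⟩ := hp (DihedralGroup.r 1)
  have hph : ¬ IsOfFinOrder (p h) := by
    rw [← orderOf_eq_zero_iff, hh]
    exact DihedralGroup.orderOf_r_one
  have hker : ∀ (g : G) (y : C), g * i y * g⁻¹ ∈ i.range := by
    intro g y
    rw [hexact, MonoidHom.mem_ker]
    have hy : p (i y) = 1 := by
      have : i y ∈ p.ker := hexact ▸ MonoidHom.mem_range.2 ⟨y, rfl⟩
      exact this
    simp [hy]
  choose ψ hψ using fun (g : G) (y : C) => MonoidHom.mem_range.1 (hker g y)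
  have hψinv : ∀ g y, ψ g⁻¹ (ψ g y) = y := by
    intro g y
    apply hi
    rw [hψ, hψ]
    group
  have hmul : ∀ y z : C, ψ h (y * z) = ψ h y * ψ h z := by
    intro y z
    apply hi
    rw [map_mul, hψ, hψ, hψ, map_mul]
    group
  let φ : C ≃* C :=
    { toFun := ψ h, invFun := ψ h⁻¹,
      left_inv := hψinv h,
      right_inv := fun y => by have := hψinv h⁻¹ y; rwa [inv_inv] at this,
      map_mul' := hmul }
  have hφ : ∀ y : C, i (φ y) = h * i y * h⁻¹ := fun y => hψ h y
  have hφc : ¬ IsOfFinOrder (φ c) := by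
    intro hf
    obtain ⟨n, hn, h1⟩ := isOfFinOrder_iff_pow_eq_one.1 hf
    exact hc (isOfFinOrder_iff_pow_eq_one.2
      ⟨n, hn, φ.injective (by rw [map_pow, h1, map_one])⟩)
  obtain ⟨a, ha, hmem⟩ := aux_exists_zpow_mem (Subgroup.zpowers c) (φ c)
  obtain ⟨s, hs⟩ := Subgroup.mem_zpowers_iff.1 hmem
  have hφczpow := injective_zpow_iff_not_isOfFinOrder.2 hφc
  have hs0 : s ≠ 0 := by
    intro h0
    apply ha
    apply hφczpow
    show φ c ^ a = φ c ^ (0 : ℤ)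
    rw [← hs, h0, zpow_zero, zpow_zero]
  have hφca : φ (c ^ a) = c ^ s := by rw [map_zpow, hs]
  have hkey : s = a ∨ s = -a := by
    have h1 : (Subgroup.zpowers (c ^ a)).map φ.toMonoidHom = Subgroup.zpowers (c ^ s) := by
      rw [MonoidHom.map_zpowers]
      exact congrArg _ hφca
    have h2 : ((Subgroup.zpowers (c ^ a)).map φ.toMonoidHom).index
        = (Subgroup.zpowers (c ^ a)).index :=
      Subgroup.index_map_eq _ φ.surjective (by
        intro x hx
        have hx1 : φ x = 1 := hx
        have hx2 : x = 1 := by apply φ.injective; rw [hx1, map_one]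
        rw [hx2]; exact one_mem _)
    have h3 : s.natAbs * (Subgroup.zpowers c).index = a.natAbs * (Subgroup.zpowers c).index := by
      rw [← aux_index_zpowers_zpow hc s, ← aux_index_zpowers_zpow hc a, ← h1, h2]
    exact Int.natAbs_eq_natAbs_iff.1
      (Nat.eq_of_mul_eq_mul_right (Nat.pos_of_ne_zero hfin.index_ne_zero) h3)
  set w : G := i (c ^ a) with hw
  have hwo : ¬ IsOfFinOrder w := by
    rw [← orderOf_eq_zero_iff, orderOf_injective i hi, orderOf_eq_zero_iff]
    intro hf
    obtain ⟨n, hn, h1⟩ := isOfFinOrder_iff_pow_eq_one.1 hf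
    rw [← zpow_natCast, ← zpow_mul] at h1
    have h2 : a * (n : ℤ) = 0 := hczpow (h1.trans (zpow_zero c).symm)
    rcases mul_eq_zero.1 h2 with h' | h'
    · exact ha h'
    · simp only [Int.natCast_eq_zero] at h'
      omega
  have hpw : p w = 1 := by
    have : w ∈ p.ker := hexact ▸ MonoidHom.mem_range.2 ⟨c ^ a, rfl⟩
    exact this
  have hconj : h * w * h⁻¹ = i (c ^ s) := by rw [hw, ← hφca, hφ]
  obtain ⟨t, hpt, hcomm⟩ : ∃ t : G, ¬ IsOfFinOrder (p t) ∧ Commute t w := by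
    rcases hkey with rfl | rfl
    · exact ⟨h, hph, mul_inv_eq_iff_eq_mul.1 hconj⟩
    · have hinv : h * w * h⁻¹ = w⁻¹ := by rw [hconj, zpow_neg, map_inv]
      refine ⟨h ^ 2, ?_, ?_⟩
      · intro hf
        rw [map_pow] at hf
        rcases isOfFinOrder_pow.1 hf with hf' | h2
        · exact hph hf'
        · omega
      · have hcj : MulAut.conj h w = w⁻¹ := by rw [MulAut.conj_apply]; exact hinv
        have conj2 : MulAut.conj (h ^ 2) w = w := by
          rw [map_pow, pow_two, MulAut.mul_apply, hcj, map_inv, hcj, inv_inv]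
        have h3 : h ^ 2 * w * (h ^ 2)⁻¹ = w := by
          rwa [MulAut.conj_apply] at conj2
        exact mul_inv_eq_iff_eq_mul.1 h3
  have hptzpow := injective_zpow_iff_not_isOfFinOrder.2 hpt
  have hwzpow := injective_zpow_iff_not_isOfFinOrder.2 hwo
  refine ⟨MonoidHom.mk' (fun z => t ^ (Multiplicative.toAdd z).1 * w ^ (Multiplicative.toAdd z).2)
    ?_, ?_⟩
  · intro z₁ z₂
    show t ^ (Multiplicative.toAdd (z₁ * z₂)).1 * w ^ (Multiplicative.toAdd (z₁ * z₂)).2 = _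
    have hz : Multiplicative.toAdd (z₁ * z₂)
        = Multiplicative.toAdd z₁ + Multiplicative.toAdd z₂ := rfl
    rw [hz]
    simp only [Prod.fst_add, Prod.snd_add, zpow_add]
    exact (hcomm.zpow_zpow (Multiplicative.toAdd z₂).1
      (Multiplicative.toAdd z₁).2).mul_mul_mul_comm _ _
  · rw [injective_iff_map_eq_one]
    intro z hz
    simp only [MonoidHom.mk'_apply] at hz
    have hm : (Multiplicative.toAdd z).1 = 0 := by
      apply hptzpow
      show p t ^ (Multiplicative.toAdd z).1 = p t ^ (0 : ℤ)
      have := congrArg p hz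
      simp only [map_mul, map_zpow, map_one, hpw, one_zpow, mul_one] at this
      simpa using this
    have hn : (Multiplicative.toAdd z).2 = 0 := by
      apply hwzpow
      show w ^ (Multiplicative.toAdd z).2 = w ^ (0 : ℤ)
      rw [hm] at hz
      simpa using hz
    have h0 : Multiplicative.toAdd z = 0 := Prod.ext hm hn
    exact Multiplicative.toAdd.injective h0
end

section
/- Let H be a group and V a ℚ[H]-module that is finite dimensional over ℚ. Then the H-fixed points of coind_e^H(ℚ) ⊗_ℚ V (with the diagonal action, where coind_e^H(ℚ) = Hom_ℚ(ℚ[H],ℚ) with action (h·f)(x) = f(xh)) form a ℚ-vector space isomorphic to V; in particular if V ≠ 0 then the fixed points are nonzero. -/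
open TensorProduct

/-- Right translation by `h` on the coinduced module `coind_e^H(ℚ) = (H → ℚ)`. -/
def rightTranslation {H : Type*} [Group H] (h : H) : (H → ℚ) →ₗ[ℚ] (H → ℚ) where
  toFun f := fun x => f (x * h)
  map_add' _ _ := rfl
  map_smul' _ _ := rfl

/-- The submodule of `H`-fixed points of `coind_e^H(ℚ) ⊗ V` for the diagonal action. -/
noncomputable def fixedPointsSubmodule {H : Type*} [Group H] (V : Type*) [AddCommGroup V] [Module ℚ V]
    [DistribMulAction H V] [SMulCommClass H ℚ V] :
    Submodule ℚ ((H → ℚ) ⊗[ℚ] V) :=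
  ⨅ h : H,
    LinearMap.eqLocus
      (TensorProduct.map (rightTranslation h) (DistribMulAction.toLinearMap ℚ V h))
      (LinearMap.id : (H → ℚ) ⊗[ℚ] V →ₗ[ℚ] (H → ℚ) ⊗[ℚ] V)

section Aux

variable {H : Type*} [Group H] {V : Type*} [AddCommGroup V] [Module ℚ V]

/-- Evaluation at `x` on the first factor: `f ⊗ v ↦ f x • v`. -/
noncomputable def evAt (x : H) : (H → ℚ) ⊗[ℚ] V →ₗ[ℚ] V :=
  TensorProduct.lift ((LinearMap.lsmul ℚ V).comp (LinearMap.proj x))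

@[simp] lemma evAt_tmul (x : H) (f : H → ℚ) (v : V) :
    evAt x (f ⊗ₜ[ℚ] v) = f x • v := rfl

lemma evAt_eq_zero_of_forall (t : (H → ℚ) ⊗[ℚ] V) (h : ∀ x, evAt x t = 0) : t = 0 := by
  classical
  let b := Module.Free.chooseBasis ℚ V
  set ι := Module.Free.ChooseBasisIndex ℚ V
  let E : ((H → ℚ) ⊗[ℚ] V) ≃ₗ[ℚ] (ι →₀ (H → ℚ)) :=
    (TensorProduct.congr (LinearEquiv.refl ℚ (H → ℚ)) b.repr).trans
      (TensorProduct.finsuppScalarRight ℚ ℚ (H → ℚ) ι)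
  have key : ∀ (t : (H → ℚ) ⊗[ℚ] V) (i : ι) (x : H),
      E t i x = b.repr (evAt x t) i := by
    intro t
    induction t using TensorProduct.induction_on with
    | zero => intro i x; simp
    | tmul f v =>
        intro i x
        simp [E, TensorProduct.finsuppScalarRight_apply_tmul_apply, mul_comm]
    | add s t hs ht =>
        intro i x
        simp [map_add, hs, ht]
  apply E.injective
  ext i x
  simp [key, h]

lemma evAt_injective {t s : (H → ℚ) ⊗[ℚ] V} (h : ∀ x, evAt x t = evAt x s) : t = s := by
  have := evAt_eq_zero_of_forall (t - s) (fun x => by simp [map_sub, h x])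
  exact sub_eq_zero.mp this

variable [DistribMulAction H V] [SMulCommClass H ℚ V]

lemma evAt_map (h : H) (x : H) (t : (H → ℚ) ⊗[ℚ] V) :
    evAt x (TensorProduct.map (rightTranslation h) (DistribMulAction.toLinearMap ℚ V h) t)
      = h • evAt (x * h) t := by
  induction t using TensorProduct.induction_on with
  | zero => simp
  | tmul f v =>
      simp only [TensorProduct.map_tmul, evAt_tmul, DistribSMul.toLinearMap_apply]
      have : (rightTranslation h f) x = f (x * h) := rfl
      rw [this, smul_comm]
      rfl
  | add s t hs ht => simp [map_add, hs, ht, smul_add]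

end Aux

theorem fixed_points_of_coinduced_tensor
    {H : Type*} [Group H] {V : Type*} [AddCommGroup V] [Module ℚ V]
    [DistribMulAction H V] [SMulCommClass H ℚ V] [FiniteDimensional ℚ V] :
    Nonempty (fixedPointsSubmodule (H := H) V ≃ₗ[ℚ] V) := by
  classical
  set S := fixedPointsSubmodule (H := H) V
  have memS : ∀ t : (H → ℚ) ⊗[ℚ] V, t ∈ S ↔ ∀ h : H,
      TensorProduct.map (rightTranslation h) (DistribMulAction.toLinearMap ℚ V h) t = t := by
    intro t
    simp [S, fixedPointsSubmodule, Submodule.mem_iInf, LinearMap.eqLocus, LinearMap.mem_ker]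
  -- key property of fixed elements
  have fix_ev : ∀ t : (H → ℚ) ⊗[ℚ] V, t ∈ S → ∀ x : H, evAt x t = x⁻¹ • evAt 1 t := by
    intro t ht x
    have h1 : evAt 1 (TensorProduct.map (rightTranslation x)
        (DistribMulAction.toLinearMap ℚ V x) t) = evAt 1 t := by rw [(memS t).mp ht x]
    rw [evAt_map, one_mul] at h1
    rw [← h1, inv_smul_smul]
  -- the map to V
  let L : S →ₗ[ℚ] V := (evAt 1).comp S.subtype
  have hinj : Function.Injective L := by
    intro m m' hmm'
    apply Subtype.ext
    apply evAt_injective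
    intro x
    rw [fix_ev _ m.2 x, fix_ev _ m'.2 x]
    have : evAt (V := V) 1 (m : (H → ℚ) ⊗[ℚ] V) = evAt 1 (m' : (H → ℚ) ⊗[ℚ] V) := hmm'
    rw [this]
  have hsurj : Function.Surjective L := by
    intro v
    let b := Module.finBasis ℚ V
    let t : (H → ℚ) ⊗[ℚ] V := ∑ i, (fun x : H => b.repr (x⁻¹ • v) i) ⊗ₜ[ℚ] b i
    have hev : ∀ x : H, evAt x t = x⁻¹ • v := by
      intro x
      simp only [t, map_sum, evAt_tmul]
      exact b.sum_repr (x⁻¹ • v)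
    have htS : t ∈ S := by
      rw [memS]
      intro h
      apply evAt_injective
      intro x
      rw [evAt_map, hev, hev, mul_inv_rev, smul_smul, mul_inv_cancel_left]
    refine ⟨⟨t, htS⟩, ?_⟩
    show evAt 1 t = v
    rw [hev, inv_one, one_smul]
  exact ⟨LinearEquiv.ofBijective L ⟨hinj, hsurj⟩⟩
end

section
/- Let G be a group acting on a connected graph Γ (its Cayley graph with respect to a finite generating set {σ₁,…,σ_d}), let H ≤ G, and let S be a finite union of right cosets of H in G. Then the set of connected components of the full subgraph of Γ spanned by G \ S has only finitely many orbits under the left action of H. -/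
/-- One step in the Cayley graph of `G` w.r.t. generators `σ`, staying outside `S`:
`x` and `y` lie outside `S` and differ by right multiplication by some `σ i` or its
inverse. -/
def cayleyStepOutside {G : Type*} [Group G] {d : ℕ} (σ : Fin d → G) (S : Set G)
    (x y : G) : Prop :=
  x ∉ S ∧ y ∉ S ∧ ∃ i : Fin d, y = x * σ i ∨ y = x * (σ i)⁻¹

theorem finitely_many_H_orbits_of_components
    {G : Type*} [Group G] {d : ℕ} (σ : Fin d → G)
    (hgen : Subgroup.closure (Set.range σ) = ⊤)
    (H : Subgroup G) (T : Finset G)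
    (S : Set G) (hS : S = ⋃ t ∈ T, (fun h => h * t) '' (H : Set G)) :
    ∃ F : Finset G, (↑F : Set G) ⊆ Sᶜ ∧
      ∀ x : G, x ∉ S → ∃ f ∈ F, ∃ h ∈ H,
        Relation.ReflTransGen (cayleyStepOutside σ S) x (h * f) := by
  classical
  -- membership in S
  have hmemS : ∀ x : G, x ∈ S ↔ ∃ t ∈ T, ∃ h ∈ H, x = h * t := by
    intro x
    subst hS
    simp only [Set.mem_iUnion, Set.mem_image, SetLike.mem_coe]
    constructor
    · rintro ⟨t, ht, h, hh, rfl⟩; exact ⟨t, ht, h, hh, rfl⟩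
    · rintro ⟨t, ht, h, hh, rfl⟩; exact ⟨t, ht, h, hh, rfl⟩
  have hinv : ∀ (h : G), h ∈ H → ∀ x : G, (h * x ∈ S ↔ x ∈ S) := by
    intro h hh x
    rw [hmemS, hmemS]
    constructor
    · rintro ⟨t, ht, h', hh', he⟩
      refine ⟨t, ht, h⁻¹ * h', H.mul_mem (H.inv_mem hh) hh', ?_⟩
      rw [mul_assoc, ← he, ← mul_assoc, inv_mul_cancel, one_mul]
    · rintro ⟨t, ht, h', hh', rfl⟩
      exact ⟨t, ht, h * h', H.mul_mem hh hh', (mul_assoc _ _ _).symm⟩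
  -- the step relation in the full Cayley graph
  set step : G → G → Prop := fun a b => ∃ i : Fin d, b = a * σ i ∨ b = a * (σ i)⁻¹
    with hstepdef
  have hsymm : Symmetric step := by
    rintro a b ⟨i, h | h⟩
    · exact ⟨i, Or.inr (by rw [h, mul_assoc, mul_inv_cancel, mul_one])⟩
    · exact ⟨i, Or.inl (by rw [h, mul_assoc, inv_mul_cancel, mul_one])⟩
  have hlift : ∀ (g a b : G), Relation.ReflTransGen step a b →
      Relation.ReflTransGen step (g * a) (g * b) := by
    intro g a b hab
    refine Relation.ReflTransGen.lift (p := step) (fun z => g * z) ?_ _ _ hab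
    rintro u v ⟨i, hv | hv⟩
    · exact ⟨i, Or.inl (by rw [hv, mul_assoc])⟩
    · exact ⟨i, Or.inr (by rw [hv, mul_assoc])⟩
  have hone : ∀ g : G, Relation.ReflTransGen step 1 g := by
    intro g
    have hg : g ∈ Subgroup.closure (Set.range σ) := by rw [hgen]; trivial
    refine Subgroup.closure_induction
      (p := fun g _ => Relation.ReflTransGen step 1 g) ?_ ?_ ?_ ?_ hg
    · rintro x ⟨i, rfl⟩
      exact Relation.ReflTransGen.single ⟨i, Or.inl (one_mul _).symm⟩
    · exact Relation.ReflTransGen.refl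
    · intro x y _ _ px py
      exact px.trans (by simpa using hlift x 1 y py)
    · intro x _ px
      have px' : Relation.ReflTransGen step x 1 :=
        by haveI : Std.Symm step := ⟨fun a b h => hsymm h⟩; exact Std.Symm.symm _ _ px
      simpa using hlift x⁻¹ x 1 px'
  have hconn : ∀ x y : G, Relation.ReflTransGen step x y := by
    intro x y
    simpa using hlift x 1 (x⁻¹ * y) (hone _)
  -- the finite set F
  set F : Finset G :=
    (insert (1 : G) ((T ×ˢ (Finset.univ : Finset (Fin d)) ×ˢ
        (Finset.univ : Finset Bool)).image
      (fun p : G × Fin d × Bool => p.1 * (cond p.2.2 (σ p.2.1) (σ p.2.1)⁻¹)))).filter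
      (fun g => g ∉ S) with hF
  refine ⟨F, ?_, ?_⟩
  · intro g hg
    simp only [hF, Finset.coe_filter, Set.mem_setOf_eq, Finset.mem_insert] at hg
    exact hg.2
  · intro x hx
    -- main induction: follow a path from x to 1 in the full Cayley graph
    have key : ∀ y : G, Relation.ReflTransGen step x y →
        (∃ f ∈ F, ∃ h ∈ H, Relation.ReflTransGen (cayleyStepOutside σ S) x (h * f)) ∨
        (y ∉ S ∧ Relation.ReflTransGen (cayleyStepOutside σ S) x y) := by
      intro y hy
      induction hy with
      | refl => exact Or.inr ⟨hx, Relation.ReflTransGen.refl⟩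
      | tail hab hbc ih =>
        rename_i b c
        rcases ih with done | ⟨hbS, hpath⟩
        · exact Or.inl done
        by_cases hcS : c ∈ S
        · -- c is the first vertex in S; b is a boundary point
          rcases (hmemS c).mp hcS with ⟨t, ht, h, hh, hc⟩
          obtain ⟨i, hbc' | hbc'⟩ := hbc
          · -- c = b * σ i, so b = c * (σ i)⁻¹ = h * (t * (σ i)⁻¹)
            have hb : b = h * (t * (σ i)⁻¹) := by
              rw [← mul_assoc, ← hc, hbc', mul_assoc, mul_inv_cancel, mul_one]
            have hfS : t * (σ i)⁻¹ ∉ S := fun hmem =>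
              hbS (hb ▸ (hinv h hh _).mpr hmem)
            refine Or.inl ⟨t * (σ i)⁻¹, ?_, h, hh, hb ▸ hpath⟩
            simp only [hF, Finset.mem_filter, Finset.mem_insert, Finset.mem_image,
              Finset.mem_product]
            exact ⟨Or.inr ⟨⟨t, i, false⟩, ⟨ht, Finset.mem_univ _, Finset.mem_univ _⟩,
              rfl⟩, hfS⟩
          · -- c = b * (σ i)⁻¹, so b = c * σ i = h * (t * σ i)
            have hb : b = h * (t * σ i) := by
              rw [← mul_assoc, ← hc, hbc', mul_assoc, inv_mul_cancel, mul_one]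
            have hfS : t * σ i ∉ S := fun hmem =>
              hbS (hb ▸ (hinv h hh _).mpr hmem)
            refine Or.inl ⟨t * σ i, ?_, h, hh, hb ▸ hpath⟩
            simp only [hF, Finset.mem_filter, Finset.mem_insert, Finset.mem_image,
              Finset.mem_product]
            exact ⟨Or.inr ⟨⟨t, i, true⟩, ⟨ht, Finset.mem_univ _, Finset.mem_univ _⟩,
              rfl⟩, hfS⟩
        · exact Or.inr ⟨hcS, hpath.tail ⟨hbS, hcS, hbc⟩⟩
    rcases key 1 (hconn x 1) with done | ⟨h1S, hpath⟩
    · exact done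
    · refine ⟨1, ?_, 1, H.one_mem, by simpa using hpath⟩
      simp only [hF, Finset.mem_filter, Finset.mem_insert]
      exact ⟨Or.inl (by simp), h1S⟩
end
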